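/- Let W : [0,1]^2 -> [0,1] be symmetric measurable and let k >= 0. For any finite family F_1,...,F_m of k-labeled graphs and real numbers y_1,...,y_m, one has Σ_{p,q} y_p y_q t(F_p F_q, W) >= 0. That is, the parameter t(·,W) is reflection positive. -/

import Mathlib

open MeasureTheory Finset
open scoped Classical

/-- The uniform probability measure on `[0,1] ⊆ ℝ`. -/
noncomputable def unif01 : Measure ℝ := volume.restrict (Set.Icc 0 1)

/-- The homomorphism density `t(F,W)` of a simple graph `F` (on a finite vertex type)
in a symmetric function `W : [0,1]² → [0,1]`. -/
noncomputable def gDens {V : Type} [Fintype V] (F : SimpleGraph V) (W : ℝ → ℝ → ℝ) : ℝ :=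
  ∫ x : V → ℝ,
    (∏ e ∈ F.edgeFinset,
      Sym2.lift ⟨fun a b => (W (x a) (x b) + W (x b) (x a)) / 2,
        fun a b => by ring⟩ e) ∂(Measure.pi fun _ => unif01)

/-- A `k`-labeled graph: a finite simple graph with `k` labeled vertices (the `Sum.inl`
vertices) plus `n` unlabeled vertices (the `Sum.inr` ones). -/
structure LabeledGraph (k : ℕ) where
  n : ℕ
  G : SimpleGraph (Fin k ⊕ Fin n)

/-- The embedding of the vertices of the first factor into the vertex set of the product. -/
def embLeft (k n₁ n₂ : ℕ) : (Fin k ⊕ Fin n₁) ↪ (Fin k ⊕ Fin (n₁ + n₂)) :=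
  (Function.Embedding.refl (Fin k)).sumMap (Fin.castAddEmb n₂)

/-- The embedding of the vertices of the second factor into the vertex set of the product. -/
def embRight (k n₁ n₂ : ℕ) : (Fin k ⊕ Fin n₂) ↪ (Fin k ⊕ Fin (n₁ + n₂)) :=
  (Function.Embedding.refl (Fin k)).sumMap (Fin.natAddEmb n₁)

/-- The product `F₁F₂` of two `k`-labeled graphs: take the disjoint union and identify
vertices carrying the same label, merging parallel edges. -/
def lgProd {k : ℕ} (F₁ F₂ : LabeledGraph k) : LabeledGraph k :=
  ⟨F₁.n + F₂.n, (F₁.G.map (embLeft k F₁.n F₂.n)) ⊔ (F₂.G.map (embRight k F₁.n F₂.n))⟩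

noncomputable def sW (W : ℝ → ℝ → ℝ) (a b : ℝ) : ℝ := (W a b + W b a) / 2

noncomputable def ew (W : ℝ → ℝ → ℝ) {V : Type*} (x : V → ℝ) : Sym2 V → ℝ :=
  Sym2.lift ⟨fun a b => sW W (x a) (x b), fun a b => by unfold sW; ring⟩

lemma ew_map (W : ℝ → ℝ → ℝ) {V V' : Type*} (f : V → V') (x : V' → ℝ) (e : Sym2 V) :
    ew W x (e.map f) = ew W (x ∘ f) e := by
  induction e using Sym2.ind with
  | _ a b => rfl

lemma ew_mk (W : ℝ → ℝ → ℝ) {V : Type*} (x : V → ℝ) (a b : V) :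
    ew W x s(a, b) = sW W (x a) (x b) := rfl


section mem
variable {W : ℝ → ℝ → ℝ} (hWmem : ∀ x y, W x y ∈ Set.Icc (0 : ℝ) 1)
include hWmem

lemma sW_mem (a b : ℝ) : sW W a b ∈ Set.Icc (0:ℝ) 1 := by
  obtain ⟨h1, h2⟩ := hWmem a b
  obtain ⟨h3, h4⟩ := hWmem b a
  constructor <;> unfold sW <;> nlinarith

lemma ew_mem {V : Type*} (x : V → ℝ) (e : Sym2 V) : ew W x e ∈ Set.Icc (0:ℝ) 1 := by
  induction e using Sym2.ind with
  | _ a b => exact sW_mem hWmem _ _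

lemma prod_ew_mem {V : Type*} (x : V → ℝ) (s : Finset (Sym2 V)) :
    (∏ e ∈ s, ew W x e) ∈ Set.Icc (0:ℝ) 1 := by
  constructor
  · exact Finset.prod_nonneg fun e _ => (ew_mem hWmem x e).1
  · exact Finset.prod_le_one (fun e _ => (ew_mem hWmem x e).1) fun e _ => (ew_mem hWmem x e).2
end mem

lemma measurable_ew {W : ℝ → ℝ → ℝ} (hW : Measurable (Function.uncurry W))
    {V : Type*} [MeasurableSpace V] [Fintype V] (e : Sym2 V) :
    Measurable fun x : V → ℝ => ew W x e := by
  induction e using Sym2.ind with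
  | _ a b =>
    have h1 : Measurable fun x : V → ℝ => W (x a) (x b) := by
      show Measurable fun x : V → ℝ => Function.uncurry W (x a, x b)
      exact hW.comp' ((measurable_pi_apply a).prodMk (measurable_pi_apply b))
    have h2 : Measurable fun x : V → ℝ => W (x b) (x a) := by
      show Measurable fun x : V → ℝ => Function.uncurry W (x b, x a)
      exact hW.comp' ((measurable_pi_apply b).prodMk (measurable_pi_apply a))
    simpa [ew_mk, sW] using (h1.add h2).div_const 2

lemma measurable_prod_ew {W : ℝ → ℝ → ℝ} (hW : Measurable (Function.uncurry W))
    {V : Type*} [MeasurableSpace V] [Fintype V] (s : Finset (Sym2 V)) :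
    Measurable fun x : V → ℝ => ∏ e ∈ s, ew W x e :=
  Finset.measurable_prod s fun e _ => measurable_ew hW e

/-- Key algebraic positivity lemma. -/
lemma psd_union {ι : Type*} [DecidableEq ι] (w : ι → ℝ)
    (hw0 : ∀ i, 0 ≤ w i) (hw1 : ∀ i, w i ≤ 1) (T : Finset ι) :
    ∀ {m : ℕ} (S : Fin m → Finset ι) (c : Fin m → ℝ), (∀ p, S p ⊆ T) →
      0 ≤ ∑ p, ∑ q, c p * c q * ∏ i ∈ S p ∪ S q, w i := by
  induction T using Finset.induction with
  | empty =>
    intro m S c hS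
    have hS' : ∀ p, S p = ∅ := fun p => Finset.subset_empty.mp (hS p)
    simp only [hS', Finset.empty_union, Finset.prod_empty, mul_one]
    rw [← Finset.sum_mul_sum]
    exact mul_self_nonneg _
  | @insert a T haT ih =>
    intro m S c hS
    have key : ∀ p q, c p * c q * ∏ i ∈ S p ∪ S q, w i
        = w a * (c p * c q * ∏ i ∈ (S p).erase a ∪ (S q).erase a, w i)
          + (1 - w a) * ((if a ∈ S p then 0 else c p) * (if a ∈ S q then 0 else c q) *
              ∏ i ∈ (S p).erase a ∪ (S q).erase a, w i) := by
      intro p q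
      have herase : (S p).erase a ∪ (S q).erase a = (S p ∪ S q).erase a := by
        rw [Finset.erase_union_distrib]
      rw [herase]
      by_cases h : a ∈ S p ∪ S q
      · rw [← Finset.mul_prod_erase _ _ h]
        rcases Finset.mem_union.mp h with h' | h'
        · simp [h']; ring
        · simp [h']; ring
      · rw [Finset.erase_eq_of_notMem h]
        have hp : a ∉ S p := fun hc => h (Finset.mem_union_left _ hc)
        have hq : a ∉ S q := fun hc => h (Finset.mem_union_right _ hc)
        simp [hp, hq]; ring
    calc (0:ℝ) ≤ w a * (∑ p, ∑ q, c p * c q * ∏ i ∈ (S p).erase a ∪ (S q).erase a, w i)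
          + (1 - w a) * (∑ p, ∑ q, (if a ∈ S p then 0 else c p) * (if a ∈ S q then 0 else c q) *
              ∏ i ∈ (S p).erase a ∪ (S q).erase a, w i) := by
          have hsub : ∀ p, (S p).erase a ⊆ T := by
            intro p i hi
            have := hS p (Finset.mem_of_mem_erase hi)
            rcases Finset.mem_insert.mp this with h | h
            · exact absurd h (Finset.ne_of_mem_erase hi)
            · exact h
          have t1 := ih (fun p => (S p).erase a) c hsub
          have t2 := ih (fun p => (S p).erase a) (fun p => if a ∈ S p then 0 else c p) hsub
          have := hw0 a; have := hw1 a
          nlinarith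
      _ = ∑ p, ∑ q, c p * c q * ∏ i ∈ S p ∪ S q, w i := by
          rw [Finset.mul_sum, Finset.mul_sum, ← Finset.sum_add_distrib]
          refine Finset.sum_congr rfl fun p _ => ?_
          rw [Finset.mul_sum, Finset.mul_sum, ← Finset.sum_add_distrib]
          exact Finset.sum_congr rfl fun q _ => (key p q).symm

/-- the "all vertices labeled" predicate -/
def bl {k n : ℕ} (e : Sym2 (Fin k ⊕ Fin n)) : Prop := ∀ v ∈ e, v.isLeft

/-- labeled-labeled edges of a `k`-labeled graph, as a finset of `Sym2 (Fin k)` -/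
noncomputable def lab {k : ℕ} (F : LabeledGraph k) : Finset (Sym2 (Fin k)) :=
  Finset.univ.filter (fun e => e.map Sum.inl ∈ F.G.edgeFinset)

/-- the other edges -/
noncomputable def ulEdges {k : ℕ} (F : LabeledGraph k) : Finset (Sym2 (Fin k ⊕ Fin F.n)) :=
  F.G.edgeFinset.filter (fun e => ¬ bl e)

noncomputable def Qf (W : ℝ → ℝ → ℝ) {k : ℕ} (F : LabeledGraph k)
    (z : Fin k → ℝ) (x : Fin F.n → ℝ) : ℝ :=
  ∏ e ∈ ulEdges F, ew W (Sum.elim z x) e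

noncomputable def Uf (W : ℝ → ℝ → ℝ) {k : ℕ} (F : LabeledGraph k) (z : Fin k → ℝ) : ℝ :=
  ∫ x, Qf W F z x ∂(Measure.pi fun _ : Fin F.n => unif01)

section comb
variable {k : ℕ} (F₁ F₂ : LabeledGraph k)

lemma bl_map_iff {n N : ℕ} (f : (Fin k ⊕ Fin n) ↪ (Fin k ⊕ Fin N))
    (hf : ∀ v, (f v).isLeft = v.isLeft) (e : Sym2 (Fin k ⊕ Fin n)) :
    bl (e.map f) ↔ bl e := by
  induction e using Sym2.ind with
  | _ a b =>
    simp only [bl, Sym2.map_pair_eq, Sym2.mem_iff]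
    constructor
    · intro h
      intro v hv
      rcases hv with h1 | h1 <;> subst h1
      · rw [← hf]; exact h _ (Or.inl rfl)
      · rw [← hf]; exact h _ (Or.inr rfl)
    · intro h v hv
      rcases hv with h1 | h1 <;> subst h1
      · rw [hf]; exact h _ (Or.inl rfl)
      · rw [hf]; exact h _ (Or.inr rfl)

lemma embLeft_isLeft (v : Fin k ⊕ Fin F₁.n) :
    ((embLeft k F₁.n F₂.n) v).isLeft = v.isLeft := by
  cases v <;> rfl

lemma embRight_isLeft (v : Fin k ⊕ Fin F₂.n) :
    ((embRight k F₁.n F₂.n) v).isLeft = v.isLeft := by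
  cases v <;> rfl

lemma embLeft_inl (a : Fin k) : (embLeft k F₁.n F₂.n) (Sum.inl a) = Sum.inl a := rfl
lemma embRight_inl (a : Fin k) : (embRight k F₁.n F₂.n) (Sum.inl a) = Sum.inl a := rfl
lemma embLeft_inr (i : Fin F₁.n) :
    (embLeft k F₁.n F₂.n) (Sum.inr i) = Sum.inr (Fin.castAdd F₂.n i) := rfl
lemma embRight_inr (i : Fin F₂.n) :
    (embRight k F₁.n F₂.n) (Sum.inr i) = Sum.inr (Fin.natAdd F₁.n i) := rfl

lemma edgeSet_map' {V V' : Type*} (f : V ↪ V') (G : SimpleGraph V) :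
    (G.map f).edgeSet = Sym2.map f '' G.edgeSet := by
  ext e
  induction e using Sym2.ind with
  | _ u v =>
    simp only [SimpleGraph.mem_edgeSet, SimpleGraph.map_adj, Set.mem_image]
    constructor
    · rintro ⟨a, b, hab, rfl, rfl⟩
      exact ⟨s(a, b), hab, rfl⟩
    · rintro ⟨e₀, he₀, he⟩
      induction e₀ using Sym2.ind with
      | _ a b =>
        rw [Sym2.map_pair_eq, Sym2.eq_iff] at he
        rcases he with ⟨h1, h2⟩ | ⟨h1, h2⟩
        · exact ⟨a, b, he₀, h1, h2⟩
        · exact ⟨b, a, (SimpleGraph.mem_edgeSet _).mp he₀ |>.symm, h2, h1⟩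

lemma edgeFinset_lgProd :
    (lgProd F₁ F₂).G.edgeFinset =
      F₁.G.edgeFinset.image (Sym2.map (embLeft k F₁.n F₂.n)) ∪
      F₂.G.edgeFinset.image (Sym2.map (embRight k F₁.n F₂.n)) := by
  apply Finset.coe_injective
  push_cast [SimpleGraph.coe_edgeFinset]
  show ((lgProd F₁ F₂).G.edgeSet : Set (Sym2 _)) = _
  rw [show (lgProd F₁ F₂).G = (F₁.G.map (embLeft k F₁.n F₂.n)) ⊔ (F₂.G.map (embRight k F₁.n F₂.n)) from rfl]
  erw [SimpleGraph.edgeSet_sup, edgeSet_map', edgeSet_map']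
  exact (by simp only [Finset.coe_union, Finset.coe_image, SimpleGraph.coe_edgeFinset] :
    (Sym2.map (embLeft k F₁.n F₂.n) '' F₁.G.edgeSet ∪ Sym2.map (embRight k F₁.n F₂.n) '' F₂.G.edgeSet :
      Set (Sym2 (Fin k ⊕ Fin (F₁.n + F₂.n)))) =
      ↑(F₁.G.edgeFinset.image (Sym2.map (embLeft k F₁.n F₂.n)) ∪
        F₂.G.edgeFinset.image (Sym2.map (embRight k F₁.n F₂.n))))

end comb

section comb2
variable {k : ℕ}

lemma map_inl_map_emb {n N : ℕ} (f : (Fin k ⊕ Fin n) ↪ (Fin k ⊕ Fin N))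
    (hl : ∀ a, f (Sum.inl a) = Sum.inl a) (e : Sym2 (Fin k)) :
    (e.map (Sum.inl : Fin k → Fin k ⊕ Fin n)).map f
      = e.map (Sum.inl : Fin k → Fin k ⊕ Fin N) := by
  induction e using Sym2.ind with
  | _ a b => simp [Sym2.map_pair_eq, hl]

lemma filter_bl_image {n N : ℕ} (G : SimpleGraph (Fin k ⊕ Fin n))
    (f : (Fin k ⊕ Fin n) ↪ (Fin k ⊕ Fin N))
    (hl : ∀ a, f (Sum.inl a) = Sum.inl a) (hr : ∀ v, (f v).isLeft = v.isLeft) :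
    (G.edgeFinset.image (Sym2.map f)).filter bl
      = (Finset.univ.filter (fun e : Sym2 (Fin k) => e.map Sum.inl ∈ G.edgeFinset)).image
          (Sym2.map (Sum.inl : Fin k → Fin k ⊕ Fin N)) := by
  ext e
  simp only [Finset.mem_filter, Finset.mem_image, Finset.mem_univ, true_and]
  constructor
  · rintro ⟨⟨e₀, he₀, rfl⟩, hbl⟩
    have hbl0 : bl e₀ := (bl_map_iff f hr e₀).mp hbl
    induction e₀ using Sym2.ind with
    | _ u v =>
      have hu := hbl0 u (by simp)
      have hv := hbl0 v (by simp)
      obtain ⟨a, rfl⟩ := Sum.isLeft_iff.mp hu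
      obtain ⟨b, rfl⟩ := Sum.isLeft_iff.mp hv
      refine ⟨s(a, b), ?_, ?_⟩
      · simpa [Sym2.map_pair_eq] using he₀
      · simp [Sym2.map_pair_eq, hl]
  · rintro ⟨e', he', rfl⟩
    refine ⟨⟨e'.map Sum.inl, he', map_inl_map_emb f hl e'⟩, ?_⟩
    induction e' using Sym2.ind with
    | _ a b =>
      intro v hv
      rw [Sym2.map_pair_eq, Sym2.mem_iff] at hv
      rcases hv with rfl | rfl <;> rfl

lemma filter_nbl_image {n N : ℕ} (G : SimpleGraph (Fin k ⊕ Fin n))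
    (f : (Fin k ⊕ Fin n) ↪ (Fin k ⊕ Fin N))
    (hr : ∀ v, (f v).isLeft = v.isLeft) :
    (G.edgeFinset.image (Sym2.map f)).filter (fun e => ¬ bl e)
      = (G.edgeFinset.filter (fun e => ¬ bl e)).image (Sym2.map f) := by
  rw [Finset.filter_image]
  congr 1
  apply Finset.filter_congr
  intro e _
  exact not_congr (bl_map_iff f hr e)

lemma disj_nbl (F₁ F₂ : LabeledGraph k) :
    Disjoint
      ((F₁.G.edgeFinset.filter (fun e => ¬ bl e)).image (Sym2.map (embLeft k F₁.n F₂.n)))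
      ((F₂.G.edgeFinset.filter (fun e => ¬ bl e)).image (Sym2.map (embRight k F₁.n F₂.n))) := by
  rw [Finset.disjoint_left]
  rintro e he₁ he₂
  obtain ⟨e₁, he₁m, rfl⟩ := Finset.mem_image.mp he₁
  obtain ⟨e₂, he₂m, heq⟩ := Finset.mem_image.mp he₂
  have hnbl : ¬ bl e₁ := (Finset.mem_filter.mp he₁m).2
  rw [bl] at hnbl
  push_neg at hnbl
  obtain ⟨u, hu, hul⟩ := hnbl
  obtain ⟨i, rfl⟩ : ∃ i, u = Sum.inr i := by
    cases u with
    | inl a => simp at hul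
    | inr i => exact ⟨i, rfl⟩
  have hmem : (Sum.inr (Fin.castAdd F₂.n i) : Fin k ⊕ Fin (F₁.n + F₂.n))
      ∈ e₁.map (embLeft k F₁.n F₂.n) :=
    Sym2.mem_map.mpr ⟨Sum.inr i, hu, rfl⟩
  rw [← heq] at hmem
  obtain ⟨u', _, hu'⟩ := Sym2.mem_map.mp hmem
  cases u' with
  | inl a => simp [embRight_inl] at hu'
  | inr j =>
    rw [embRight_inr] at hu'
    have := congrArg (fun v : Fin k ⊕ Fin (F₁.n + F₂.n) => v) hu'
    have hval : (Fin.natAdd F₁.n j : Fin (F₁.n + F₂.n)) = Fin.castAdd F₂.n i :=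
      Sum.inr.inj hu'
    have : F₁.n + (j : ℕ) = (i : ℕ) := congrArg Fin.val hval
    have := i.isLt
    omega

end comb2

set_option maxHeartbeats 1000000 in
lemma prod_decomp {k : ℕ} (W : ℝ → ℝ → ℝ) (F₁ F₂ : LabeledGraph k)
    (z : Fin k → ℝ) (x : Fin (F₁.n + F₂.n) → ℝ) :
    ∏ e ∈ (lgProd F₁ F₂).G.edgeFinset, ew W (Sum.elim z x) e
      = (∏ e ∈ lab F₁ ∪ lab F₂, ew W z e) *
        (Qf W F₁ z (x ∘ Fin.castAdd F₂.n) * Qf W F₂ z (x ∘ Fin.natAdd F₁.n)) := by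
  have hlL : ∀ a, (embLeft k F₁.n F₂.n) (Sum.inl a) = Sum.inl a := fun a => rfl
  have hlR : ∀ a, (embRight k F₁.n F₂.n) (Sum.inl a) = Sum.inl a := fun a => rfl
  have hrL := embLeft_isLeft F₁ F₂
  have hrR := embRight_isLeft F₁ F₂
  rw [edgeFinset_lgProd]
  have hsplit := Finset.prod_filter_mul_prod_filter_not
    (F₁.G.edgeFinset.image (Sym2.map (embLeft k F₁.n F₂.n)) ∪
      F₂.G.edgeFinset.image (Sym2.map (embRight k F₁.n F₂.n))) bl
      (fun e => ew W (Sum.elim z x) e)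
  refine hsplit.symm.trans ?_
  congr 1
  · -- labeled part
    rw [Finset.filter_union, filter_bl_image F₁.G _ hlL hrL, filter_bl_image F₂.G _ hlR hrR,
      ← Finset.image_union]
    rw [Finset.prod_image (fun e₁ _ e₂ _ h => Sym2.map.injective Sum.inl_injective h)]
    rw [show lab F₁ ∪ lab F₂ = Finset.univ.filter (fun e : Sym2 (Fin k) => e.map Sum.inl ∈ F₁.G.edgeFinset) ∪
      Finset.univ.filter (fun e : Sym2 (Fin k) => e.map Sum.inl ∈ F₂.G.edgeFinset) from rfl]
    refine Finset.prod_congr rfl fun e _ => ?_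
    rw [ew_map]
    congr 1
  · -- unlabeled part
    rw [Finset.filter_union, filter_nbl_image F₁.G _ hrL, filter_nbl_image F₂.G _ hrR,
      Finset.prod_union (disj_nbl F₁ F₂)]
    congr 1
    · rw [Finset.prod_image (fun e₁ _ e₂ _ h =>
        Sym2.map.injective (embLeft k F₁.n F₂.n).injective h)]
      refine Finset.prod_congr rfl fun e _ => ?_
      rw [ew_map]
      congr 1
      funext v
      cases v <;> rfl
    · rw [Finset.prod_image (fun e₁ _ e₂ _ h =>
        Sym2.map.injective (embRight k F₁.n F₂.n).injective h)]
      refine Finset.prod_congr rfl fun e _ => ?_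
      rw [ew_map]
      congr 1
      funext v
      cases v <;> rfl

instance : IsProbabilityMeasure unif01 := by
  constructor
  rw [unif01, Measure.restrict_apply MeasurableSet.univ, Set.univ_inter, Real.volume_Icc]
  norm_num

lemma measurable_sum_elim {k n : ℕ} :
    Measurable fun p : (Fin k → ℝ) × (Fin n → ℝ) => (Sum.elim p.1 p.2 : Fin k ⊕ Fin n → ℝ) := by
  apply measurable_pi_lambda
  intro i
  cases i with
  | inl a => exact (measurable_pi_apply a).comp measurable_fst
  | inr b => exact (measurable_pi_apply b).comp measurable_snd

lemma measurable_sum_elim_right {k n : ℕ} (z : Fin k → ℝ) :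
    Measurable fun x : Fin n → ℝ => (Sum.elim z x : Fin k ⊕ Fin n → ℝ) := by
  apply measurable_pi_lambda
  intro i
  cases i with
  | inl a => exact measurable_const
  | inr b => exact measurable_pi_apply b

lemma integrable_of_bounds {α : Type*} [MeasurableSpace α] (μ : Measure α) [IsFiniteMeasure μ]
    {f : α → ℝ} (hm : AEStronglyMeasurable f μ) (hb : ∀ a, f a ∈ Set.Icc (0:ℝ) 1) :
    Integrable f μ :=
  Integrable.mono' (integrable_const 1) hm (Filter.Eventually.of_forall fun a => by
    rw [Real.norm_eq_abs, abs_of_nonneg (hb a).1]; exact (hb a).2)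

section analytic
variable {W : ℝ → ℝ → ℝ} (hWmeas : Measurable (Function.uncurry W))
  (hWmem : ∀ x y, W x y ∈ Set.Icc (0 : ℝ) 1) {k : ℕ}

include hWmeas in
lemma measurable_Qf (F : LabeledGraph k) :
    Measurable fun p : (Fin k → ℝ) × (Fin F.n → ℝ) => Qf W F p.1 p.2 :=
  (measurable_prod_ew hWmeas (ulEdges F)).comp' measurable_sum_elim

include hWmeas in
lemma measurable_Qf_right (F : LabeledGraph k) (z : Fin k → ℝ) :
    Measurable fun x : Fin F.n → ℝ => Qf W F z x :=
  (measurable_prod_ew hWmeas (ulEdges F)).comp' (measurable_sum_elim_right z)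

include hWmem in
lemma Qf_mem (F : LabeledGraph k) (z : Fin k → ℝ) (x : Fin F.n → ℝ) :
    Qf W F z x ∈ Set.Icc (0:ℝ) 1 :=
  prod_ew_mem hWmem _ _

include hWmeas hWmem in
lemma integrable_Qf (F : LabeledGraph k) (z : Fin k → ℝ) :
    Integrable (fun x => Qf W F z x) (Measure.pi fun _ : Fin F.n => unif01) :=
  integrable_of_bounds _ (measurable_Qf_right hWmeas F z).aestronglyMeasurable
    (Qf_mem hWmem F z)

include hWmeas hWmem in
lemma Uf_mem (F : LabeledGraph k) (z : Fin k → ℝ) : Uf W F z ∈ Set.Icc (0:ℝ) 1 := by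
  constructor
  · exact integral_nonneg fun x => (Qf_mem hWmem F z x).1
  · calc ∫ x, Qf W F z x ∂(Measure.pi fun _ : Fin F.n => unif01)
        ≤ ∫ _, (1:ℝ) ∂(Measure.pi fun _ : Fin F.n => unif01) :=
          integral_mono (integrable_Qf hWmeas hWmem F z) (integrable_const 1)
            fun x => (Qf_mem hWmem F z x).2
      _ = 1 := by simp

include hWmeas in
lemma measurable_Uf (F : LabeledGraph k) : Measurable (Uf W F) :=
  ((measurable_Qf hWmeas F).stronglyMeasurable.integral_prod_right').measurable

lemma gDens_eq_prod_ew {V : Type} [Fintype V] (F : SimpleGraph V) :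
    gDens F W = ∫ x : V → ℝ, ∏ e ∈ F.edgeFinset, ew W x e ∂(Measure.pi fun _ => unif01) := rfl

end analytic

section main
variable {W : ℝ → ℝ → ℝ} (hWmeas : Measurable (Function.uncurry W))
  (hWmem : ∀ x y, W x y ∈ Set.Icc (0 : ℝ) 1) {k : ℕ}

include hWmeas hWmem in
lemma gDens_lgProd (F₁ F₂ : LabeledGraph k) :
    gDens (lgProd F₁ F₂).G W
      = ∫ z, (∏ e ∈ lab F₁ ∪ lab F₂, ew W z e) * (Uf W F₁ z * Uf W F₂ z)
          ∂(Measure.pi fun _ : Fin k => unif01) := by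
  have h0 : gDens (lgProd F₁ F₂).G W
      = ∫ x : (Fin k ⊕ Fin (F₁.n + F₂.n)) → ℝ,
          ∏ e ∈ (lgProd F₁ F₂).G.edgeFinset, ew W x e ∂(Measure.pi fun _ => unif01) := rfl
  set N := F₁.n + F₂.n with hN
  set E1 : ((Fin k ⊕ Fin N) → ℝ) ≃ᵐ ((Fin k → ℝ) × (Fin N → ℝ)) :=
    MeasurableEquiv.sumPiEquivProdPi (fun _ : Fin k ⊕ Fin N => ℝ) with hE1
  have MP1 : MeasurePreserving E1.symm
      ((Measure.pi fun _ : Fin k => unif01).prod (Measure.pi fun _ : Fin N => unif01))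
      (Measure.pi fun _ : Fin k ⊕ Fin N => unif01) :=
    measurePreserving_sumPiEquivProdPi_symm (fun _ : Fin k ⊕ Fin N => unif01)
  have hsymm : ∀ p : (Fin k → ℝ) × (Fin N → ℝ), E1.symm p = Sum.elim p.1 p.2 := by
    rintro ⟨z, x⟩
    funext i
    cases i <;> rfl
  have h1 : gDens (lgProd F₁ F₂).G W
      = ∫ p : (Fin k → ℝ) × (Fin N → ℝ),
          ∏ e ∈ (lgProd F₁ F₂).G.edgeFinset, ew W (Sum.elim p.1 p.2) e
          ∂((Measure.pi fun _ : Fin k => unif01).prod (Measure.pi fun _ : Fin N => unif01)) := by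
    rw [h0, ← MP1.integral_comp' (fun x => ∏ e ∈ (lgProd F₁ F₂).G.edgeFinset, ew W x e)]
    simp only [hsymm]
  -- integrability of the big integrand
  have hmeas_big : Measurable fun p : (Fin k → ℝ) × (Fin N → ℝ) =>
      ∏ e ∈ (lgProd F₁ F₂).G.edgeFinset, ew W (Sum.elim p.1 p.2) e :=
    (measurable_prod_ew hWmeas _).comp' measurable_sum_elim
  have hint_big : Integrable (fun p : (Fin k → ℝ) × (Fin N → ℝ) =>
      ∏ e ∈ (lgProd F₁ F₂).G.edgeFinset, ew W (Sum.elim p.1 p.2) e)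
      ((Measure.pi fun _ : Fin k => unif01).prod (Measure.pi fun _ : Fin N => unif01)) :=
    integrable_of_bounds _ hmeas_big.aestronglyMeasurable fun p => prod_ew_mem hWmem _ _
  rw [h1, integral_prod _ hint_big]
  refine integral_congr_ae (Filter.Eventually.of_forall fun z => ?_)
  -- pointwise in z
  simp only [prod_decomp W F₁ F₂ z]
  rw [integral_const_mul]
  congr 1
  -- inner integral
  set E2 : ((Fin F₁.n → ℝ) × (Fin F₂.n → ℝ)) ≃ᵐ (Fin N → ℝ) :=
    (MeasurableEquiv.sumPiEquivProdPi (fun _ : Fin F₁.n ⊕ Fin F₂.n => ℝ)).symm.trans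
      (MeasurableEquiv.piCongrLeft (fun _ : Fin N => ℝ) finSumFinEquiv) with hE2
  have MP2 : MeasurePreserving E2
      ((Measure.pi fun _ : Fin F₁.n => unif01).prod (Measure.pi fun _ : Fin F₂.n => unif01))
      (Measure.pi fun _ : Fin N => unif01) :=
    (measurePreserving_piCongrLeft (fun _ : Fin N => unif01) finSumFinEquiv).comp
      (measurePreserving_sumPiEquivProdPi_symm (fun _ : Fin F₁.n ⊕ Fin F₂.n => unif01))
  have hc1 : ∀ (p : (Fin F₁.n → ℝ) × (Fin F₂.n → ℝ)) (i : Fin F₁.n),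
      E2 p (Fin.castAdd F₂.n i) = p.1 i := by
    rintro ⟨x₁, x₂⟩ i
    rw [← finSumFinEquiv_apply_left i]
    simp only [hE2, MeasurableEquiv.trans_apply]
    rw [MeasurableEquiv.piCongrLeft_apply_apply]
    rfl
  have hc2 : ∀ (p : (Fin F₁.n → ℝ) × (Fin F₂.n → ℝ)) (i : Fin F₂.n),
      E2 p (Fin.natAdd F₁.n i) = p.2 i := by
    rintro ⟨x₁, x₂⟩ i
    rw [← finSumFinEquiv_apply_right i]
    simp only [hE2, MeasurableEquiv.trans_apply]
    rw [MeasurableEquiv.piCongrLeft_apply_apply]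
    rfl
  rw [← MP2.integral_comp' (fun x : Fin N → ℝ =>
      Qf W F₁ z (x ∘ Fin.castAdd F₂.n) * Qf W F₂ z (x ∘ Fin.natAdd F₁.n))]
  have hpt : ∀ p : (Fin F₁.n → ℝ) × (Fin F₂.n → ℝ),
      Qf W F₁ z (E2 p ∘ Fin.castAdd F₂.n) * Qf W F₂ z (E2 p ∘ Fin.natAdd F₁.n)
        = Qf W F₁ z p.1 * Qf W F₂ z p.2 := by
    intro p
    congr 1
    · congr 1; funext i; exact hc1 p i
    · congr 1; funext i; exact hc2 p i
  simp only [hpt]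
  rw [integral_prod_mul (fun x₁ => Qf W F₁ z x₁) (fun x₂ => Qf W F₂ z x₂)]
  rfl

end main


/-- Reflection positivity of `t(·,W)`: for any `k`-labeled graphs `F₁,…,F_m` and reals
`y₁,…,y_m`, we have `Σ_{p,q} y_p y_q t(F_p F_q, W) ≥ 0`. -/
theorem gDens_reflectionPositive {k m : ℕ} (F : Fin m → LabeledGraph k)
    (y : Fin m → ℝ) (W : ℝ → ℝ → ℝ)
    (hWmeas : Measurable (Function.uncurry W))
    (hWsymm : ∀ x y, W x y = W y x)
    (hWmem : ∀ x y, W x y ∈ Set.Icc (0 : ℝ) 1) :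
    0 ≤ ∑ p : Fin m, ∑ q : Fin m, y p * y q * gDens (lgProd (F p) (F q)).G W := by
  set μk := (Measure.pi fun _ : Fin k => unif01) with hμk
  set f : Fin m → Fin m → (Fin k → ℝ) → ℝ := fun p q z =>
    y p * y q * ((∏ e ∈ lab (F p) ∪ lab (F q), ew W z e) *
      (Uf W (F p) z * Uf W (F q) z)) with hf
  have hmeasf : ∀ p q, Measurable (f p q) := fun p q =>
    measurable_const.mul ((measurable_prod_ew hWmeas _).mul
      ((measurable_Uf hWmeas (F p)).mul (measurable_Uf hWmeas (F q))))
  have hstuff : ∀ p q z, ((∏ e ∈ lab (F p) ∪ lab (F q), ew W z e) *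
      (Uf W (F p) z * Uf W (F q) z)) ∈ Set.Icc (0:ℝ) 1 := by
    intro p q z
    have h1 := prod_ew_mem hWmem z (lab (F p) ∪ lab (F q))
    have h2 := Uf_mem hWmeas hWmem (F p) z
    have h3 := Uf_mem hWmeas hWmem (F q) z
    constructor
    · exact mul_nonneg h1.1 (mul_nonneg h2.1 h3.1)
    · exact mul_le_one₀ h1.2 (mul_nonneg h2.1 h3.1) (mul_le_one₀ h2.2 h3.1 h3.2)
  have hintf : ∀ p q, Integrable (f p q) μk := by
    intro p q
    refine Integrable.mono' (integrable_const (|y p * y q|))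
      (hmeasf p q).aestronglyMeasurable (Filter.Eventually.of_forall fun z => ?_)
    have h := hstuff p q z
    have heq : ‖f p q z‖ = |y p * y q| * ((∏ e ∈ lab (F p) ∪ lab (F q), ew W z e) *
        (Uf W (F p) z * Uf W (F q) z)) := by
      rw [hf, Real.norm_eq_abs, abs_mul, abs_of_nonneg h.1]
    rw [heq]
    calc _ ≤ |y p * y q| * 1 := mul_le_mul_of_nonneg_left h.2 (abs_nonneg _)
      _ = |y p * y q| := mul_one _
  have hpt : ∀ z, 0 ≤ ∑ p, ∑ q, f p q z := by
    intro z
    have hpsd := psd_union (fun e : Sym2 (Fin k) => ew W z e)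
      (fun e => (ew_mem hWmem z e).1) (fun e => (ew_mem hWmem z e).2)
      Finset.univ (fun p => lab (F p)) (fun p => y p * Uf W (F p) z)
      (fun p => Finset.subset_univ _)
    refine le_trans hpsd (le_of_eq ?_)
    refine Finset.sum_congr rfl fun p _ => Finset.sum_congr rfl fun q _ => ?_
    rw [hf]
    ring
  calc (0:ℝ) ≤ ∫ z, ∑ p, ∑ q, f p q z ∂μk := integral_nonneg hpt
    _ = ∑ p, ∑ q, ∫ z, f p q z ∂μk := by
        rw [integral_finset_sum _ fun p _ => integrable_finset_sum _ fun q _ => hintf p q]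
        exact Finset.sum_congr rfl fun p _ =>
          integral_finset_sum _ fun q _ => hintf p q
    _ = ∑ p, ∑ q, y p * y q * gDens (lgProd (F p) (F q)).G W := by
        refine Finset.sum_congr rfl fun p _ => Finset.sum_congr rfl fun q _ => ?_
        rw [gDens_lgProd hWmeas hWmem (F p) (F q), ← hμk]
        exact integral_const_mul _ _
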